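/- Let n ≥ 2 and let φ : {A ∈ M_n(ℂ) : Aᵀ = A} → {B ∈ M_N(ℂ) : Bᵀ = −B} be a triple morphism from the symmetric n×n matrices to the skew-symmetric N×N matrices. Then the multiplicity of φ is even: there exist a natural number k with 2k·n ≤ N and unitary matrices U, V ∈ M_N(ℂ) such that φ(A) = U · (diag_{2k}(A) ⊕ 0) · V for every symmetric A ∈ M_n(ℂ), where diag_{2k}(A) ⊕ 0 is the N×N matrix with diag_{2k}(A) as its top-left corner block and zeros elsewhere. -/

import Mathlib

open Matrix

/-- The `N × M` matrix having the block-diagonal matrix `diag_k(A)`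
(built from `k` copies of the `n × m` matrix `A`) as its top-left corner block
and zeros elsewhere. -/
noncomputable def diagPad {n m : ℕ} (N M k : ℕ) (A : Matrix (Fin n) (Fin m) ℂ) :
    Matrix (Fin N) (Fin M) ℂ := Matrix.of fun i j =>
  if h : (i : ℕ) % n < n ∧ (j : ℕ) % m < m ∧ (i : ℕ) < k * n ∧ (j : ℕ) < k * m ∧
      (i : ℕ) / n = (j : ℕ) / m
  then A ⟨(i : ℕ) % n, h.1⟩ ⟨(j : ℕ) % m, h.2.1⟩ else 0

/-- The subspace of symmetric complex `n × n` matrices. -/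
noncomputable def symmSub (n : ℕ) : Submodule ℂ (Matrix (Fin n) (Fin n) ℂ) where
  carrier := {A | Aᵀ = A}
  add_mem' := by
    intro a b ha hb
    simp only [Set.mem_setOf_eq] at *
    rw [Matrix.transpose_add, ha, hb]
  zero_mem' := by simp
  smul_mem' := by
    intro c A hA
    simp only [Set.mem_setOf_eq] at *
    rw [Matrix.transpose_smul, hA]

/-- The subspace of skew-symmetric complex `n × n` matrices. -/
noncomputable def skewSub (n : ℕ) : Submodule ℂ (Matrix (Fin n) (Fin n) ℂ) where
  carrier := {A | Aᵀ = -A}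
  add_mem' := by
    intro a b ha hb
    simp only [Set.mem_setOf_eq] at *
    rw [Matrix.transpose_add, ha, hb, neg_add]
  zero_mem' := by simp
  smul_mem' := by
    intro c A hA
    simp only [Set.mem_setOf_eq] at *
    rw [Matrix.transpose_smul, hA, smul_neg]

namespace TripleAux


lemma half_cancel {M : Type*} [AddCommGroup M] [Module ℂ M] {a b : M}
    (h : a = (1/2 : ℂ) • (b + b)) : a = b := by
  rw [← two_smul ℂ b, smul_smul] at h
  norm_num at h
  exact h

lemma add_self_zero' {M : Type*} [AddCommGroup M] [Module ℂ M] {a : M}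
    (h : a + a = 0) : a = 0 := by
  have h2 : (2:ℂ) • a = 0 := by rw [two_smul]; exact h
  rcases smul_eq_zero.mp h2 with h3 | h3
  · norm_num at h3
  · exact h3

lemma proj_absorb {N : ℕ} {p f : Matrix (Fin N) (Fin N) ℂ} (hp : p * p = p)
    (h : p * f + f * p = 0) : p * f = 0 ∧ f * p = 0 := by
  have h1 : p * f = -(f * p) := eq_neg_of_add_eq_zero_left h
  have h2 : f * p = -(p * f) := eq_neg_of_add_eq_zero_right h
  have h3 : p * f * p = -(f * p) := by
    rw [h1, neg_mul, mul_assoc, hp]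
  have h4 : p * f * p = -(p * f) := by
    rw [mul_assoc, h2, mul_neg, ← mul_assoc, hp]
  have h5 : f * p = p * f := by
    have := h3.symm.trans h4
    exact neg_injective this
  have h6 : p * f = 0 := by
    apply add_self_zero'
    rw [← h5] at h ⊢
    exact h
  exact ⟨h6, by rw [h5, h6]⟩



lemma unitary_of_cols {N : ℕ} (b : Fin N → (Fin N → ℂ))
    (hb : ∀ c d, (∑ r, (starRingEnd ℂ) (b c r) * b d r) = if c = d then 1 else 0) :
    (Matrix.of fun r c => b c r) ∈ Matrix.unitaryGroup (Fin N) ℂ := by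
  rw [Matrix.mem_unitaryGroup_iff']
  ext c d
  rw [Matrix.mul_apply, Matrix.one_apply, ← hb c d]
  exact Finset.sum_congr rfl fun r _ => by
    simp [Matrix.star_apply, Matrix.of_apply]

lemma exists_unitary_cols {N : ℕ} (t : ℕ) (u : Fin N → (Fin N → ℂ))
    (hu : ∀ c d : Fin N, (c:ℕ) < t → (d:ℕ) < t →
      (∑ r, (starRingEnd ℂ) (u c r) * u d r) = if c = d then 1 else 0) :
    ∃ U ∈ Matrix.unitaryGroup (Fin N) ℂ, ∀ c : Fin N, (c:ℕ) < t → ∀ r, U r c = u c r := by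
  classical
  set v : Fin N → EuclideanSpace ℂ (Fin N) := fun c => if (c:ℕ) < t then WithLp.toLp 2 (u c) else 0 with hv
  have hcard : Module.finrank ℂ (EuclideanSpace ℂ (Fin N)) = Fintype.card (Fin N) := by
    simp
  have hON : Orthonormal ℂ (Set.restrict {c : Fin N | (c:ℕ) < t} v) := by
    rw [orthonormal_iff_ite]
    rintro ⟨c, hc⟩ ⟨d, hd⟩
    have hic : v c = WithLp.toLp 2 (u c) := if_pos hc
    have hid : v d = WithLp.toLp 2 (u d) := if_pos hd
    have : (inner ℂ (v c) (v d) : ℂ) = ∑ r, (starRingEnd ℂ) (u c r) * u d r := by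
      rw [hic, hid, PiLp.inner_apply]
      simp only [RCLike.inner_apply']
    show inner ℂ (v c) (v d) = _
    rw [this, hu c d hc hd]
    simp [Subtype.ext_iff]
  obtain ⟨bas, hbas⟩ := hON.exists_orthonormalBasis_extension_of_card_eq hcard
  refine ⟨Matrix.of fun r c => bas c r, ?_, ?_⟩
  · apply unitary_of_cols
    intro c d
    have := (orthonormal_iff_ite.mp bas.orthonormal) c d
    rw [PiLp.inner_apply] at this
    simp only [RCLike.inner_apply'] at this
    exact this
  · intro c hc r
    have : bas c = v c := hbas c hc
    rw [Matrix.of_apply, this, hv]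
    simp [hc]



lemma mul_std_mul_apply {N : ℕ} (U V : Matrix (Fin N) (Fin N) ℂ) (p q : Fin N) (r c : Fin N) :
    (U * Matrix.single p q (1:ℂ) * V) r c = U r p * V q c := by
  have h1 : ∀ s c', (Matrix.single p q (1:ℂ) * V) s c' = if s = p then V q c' else 0 := by
    intro s c'
    rcases eq_or_ne s p with rfl | h
    · simp
    · rw [if_neg h, Matrix.single_mul_apply_of_ne _ _ _ _ _ h]
  rw [mul_assoc, Matrix.mul_apply]
  simp only [h1, mul_ite, mul_zero]
  simp [Finset.sum_ite_eq']

lemma idx_div {n : ℕ} (hn : 0 < n) (a i : ℕ) (hi : i < n) : (a * n + i) / n = a := by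
  rw [mul_comm, Nat.mul_add_div hn, Nat.div_eq_of_lt hi, add_zero]

lemma idx_mod {n : ℕ} (a i : ℕ) (hi : i < n) : (a * n + i) % n = i := by
  rw [mul_comm, Nat.mul_add_mod, Nat.mod_eq_of_lt hi]

lemma diagPad_eq_sum {n N k : ℕ} (hn : 0 < n) (idx : Fin k → Fin n → Fin N)
    (hidx : ∀ a i, (idx a i : ℕ) = a * n + i) (A : Matrix (Fin n) (Fin n) ℂ) :
    diagPad N N k A = ∑ a : Fin k, ∑ i : Fin n, ∑ j : Fin n,
      A i j • Matrix.single (idx a i) (idx a j) (1:ℂ) := by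
  have hinj : ∀ (a : Fin k) (i : Fin n) (r : Fin N), idx a i = r ↔
      ((r:ℕ) < k * n ∧ (r:ℕ) / n = a ∧ (r:ℕ) % n = i) := by
    intro a i r
    constructor
    · rintro rfl
      rw [hidx]
      refine ⟨?_, ?_, ?_⟩
      · calc (a:ℕ) * n + i < a * n + n := by omega
          _ = (a+1) * n := by ring
          _ ≤ k * n := Nat.mul_le_mul_right n a.2
      · exact idx_div hn a i i.2
      · exact idx_mod a i i.2
    · rintro ⟨h1, h2, h3⟩
      apply Fin.ext
      rw [hidx, ← h2, ← h3, mul_comm]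
      exact Nat.div_add_mod r n
  ext r c
  rw [Matrix.sum_apply]
  simp only [Matrix.sum_apply]
  by_cases h : (r : ℕ) % n < n ∧ (c : ℕ) % n < n ∧ (r : ℕ) < k * n ∧ (c : ℕ) < k * n ∧
      (r : ℕ) / n = (c : ℕ) / n
  · obtain ⟨h1, h2, h3, h4, h5⟩ := h
    have hrk : (r:ℕ)/n < k := Nat.div_lt_of_lt_mul (by rwa [mul_comm] at h3)
    set a0 : Fin k := ⟨(r:ℕ)/n, hrk⟩
    set i0 : Fin n := ⟨(r:ℕ)%n, h1⟩
    set j0 : Fin n := ⟨(c:ℕ)%n, h2⟩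
    have hLHS : diagPad N N k A r c = A i0 j0 := by
      rw [diagPad, Matrix.of_apply, dif_pos ⟨h1, h2, h3, h4, h5⟩]
    rw [hLHS]
    rw [Finset.sum_eq_single a0]
    · rw [Finset.sum_eq_single i0]
      · rw [Finset.sum_eq_single j0]
        · rw [Matrix.smul_apply]
          have e1 : idx a0 i0 = r := (hinj a0 i0 r).mpr ⟨h3, rfl, rfl⟩
          have e2 : idx a0 j0 = c := (hinj a0 j0 c).mpr ⟨h4, h5.symm, rfl⟩
          rw [e1, e2]
          simp
        · intro j _ hj
          rw [Matrix.smul_apply]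
          have : ¬ (idx a0 j = c) := by
            rw [hinj]
            rintro ⟨-, -, h7⟩
            exact hj (Fin.ext h7.symm)
          rw [Matrix.single_apply_of_ne]
          · simp
          · tauto
        · intro h; exact absurd (Finset.mem_univ j0) h
      · intro i _ hi
        apply Finset.sum_eq_zero
        intro j _
        rw [Matrix.smul_apply]
        have : ¬ (idx a0 i = r) := by
          rw [hinj]
          rintro ⟨-, -, h7⟩
          exact hi (Fin.ext h7.symm)
        rw [Matrix.single_apply_of_ne]
        · simp
        · tauto
      · intro h; exact absurd (Finset.mem_univ i0) h
    · intro a _ ha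
      apply Finset.sum_eq_zero; intro i _
      apply Finset.sum_eq_zero; intro j _
      rw [Matrix.smul_apply]
      have : ¬ (idx a i = r) := by
        rw [hinj]
        rintro ⟨-, h6, -⟩
        exact ha (Fin.ext h6.symm)
      rw [Matrix.single_apply_of_ne]
      · simp
      · tauto
    · intro h; exact absurd (Finset.mem_univ a0) h
  · have hLHS : diagPad N N k A r c = 0 := by
      rw [diagPad, Matrix.of_apply, dif_neg h]
    rw [hLHS]
    symm
    apply Finset.sum_eq_zero; intro a _
    apply Finset.sum_eq_zero; intro i _
    apply Finset.sum_eq_zero; intro j _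
    rw [Matrix.smul_apply]
    by_cases hr : idx a i = r
    · by_cases hc : idx a j = c
      · exfalso
        obtain ⟨hr1, hr2, hr3⟩ := (hinj a i r).mp hr
        obtain ⟨hc1, hc2, hc3⟩ := (hinj a j c).mp hc
        exact h ⟨by omega, by omega, hr1, hc1, by omega⟩
      · rw [Matrix.single_apply_of_ne (h := by tauto)]; simp
    · rw [Matrix.single_apply_of_ne (h := by tauto)]; simp



lemma mem_symmSub {n : ℕ} (A : Matrix (Fin n) (Fin n) ℂ) : A ∈ symmSub n ↔ Aᵀ = A := Iff.rfl

lemma std_transpose {n : ℕ} (i j : Fin n) (c : ℂ) :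
    (Matrix.single i j c)ᵀ = Matrix.single j i c := by
  ext a b
  simp only [Matrix.transpose_apply, Matrix.single, Matrix.of_apply]
  by_cases h1 : j = a <;> by_cases h2 : i = b <;> simp [h1, h2]

lemma std_conjT {n : ℕ} (i j : Fin n) :
    (Matrix.single i j (1:ℂ))ᴴ = Matrix.single j i 1 := by
  ext a b
  simp only [Matrix.conjTranspose_apply, Matrix.single, Matrix.of_apply]
  by_cases h1 : j = a <;> by_cases h2 : i = b <;> simp [h1, h2]

noncomputable def oneS (n : ℕ) : symmSub n := ⟨1, Matrix.transpose_one⟩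

noncomputable def ebS {n : ℕ} (i : Fin n) : symmSub n :=
  ⟨Matrix.single i i 1, std_transpose i i 1⟩

noncomputable def sbe {n : ℕ} (i j : Fin n) : symmSub n :=
  ⟨Matrix.single i j 1 + Matrix.single j i 1, by
    rw [mem_symmSub, Matrix.transpose_add, std_transpose, std_transpose, add_comm]⟩

lemma sbe_comm {n : ℕ} (i j : Fin n) : sbe i j = sbe j i := Subtype.ext (add_comm _ _)

lemma sbe_diag {n : ℕ} (i : Fin n) : sbe i i = (2:ℂ) • ebS i := by
  apply Subtype.ext
  show Matrix.single i i (1:ℂ) + Matrix.single i i 1 = (2:ℂ) • Matrix.single i i 1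
  rw [Matrix.smul_single, ← Matrix.single_add]
  norm_num

lemma sum_ebS {n : ℕ} : (∑ i, ebS i : symmSub n) = oneS n := by
  apply Subtype.ext
  rw [AddSubmonoidClass.coe_finset_sum]
  show ∑ i, (Matrix.single i i (1:ℂ)) = 1
  ext a b
  rw [Matrix.sum_apply]
  by_cases hab : a = b
  · subst hab
    rw [Matrix.one_apply_eq, Finset.sum_eq_single a]
    · simp
    · intro i _ hi
      exact Matrix.single_apply_of_ne _ _ _ _ _ (by tauto)
    · intro h; exact absurd (Finset.mem_univ a) h
  · rw [Matrix.one_apply_ne hab]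
    apply Finset.sum_eq_zero
    intro i _
    exact Matrix.single_apply_of_ne _ _ _ _ _ (by rintro ⟨rfl, rfl⟩; exact hab rfl)

noncomputable def jord {n : ℕ} (A B : symmSub n) : symmSub n :=
  ⟨(A : Matrix (Fin n) (Fin n) ℂ) * B + (B : Matrix (Fin n) (Fin n) ℂ) * A, by
    rw [mem_symmSub, Matrix.transpose_add, Matrix.transpose_mul, Matrix.transpose_mul,
      (mem_symmSub _).mp A.2, (mem_symmSub _).mp B.2, add_comm]⟩

lemma std_mul_same' {n : ℕ} (i j k : Fin n) :
    Matrix.single i j (1:ℂ) * Matrix.single j k 1 = Matrix.single i k 1 := by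
  rw [Matrix.single_mul_single_same, one_mul]

lemma std_mul_ne' {n : ℕ} (i j k l : Fin n) (h : j ≠ k) :
    Matrix.single i j (1:ℂ) * Matrix.single k l 1 = 0 :=
  Matrix.single_mul_single_of_ne (1:ℂ) i j k h 1

lemma jord_ee_same {n : ℕ} (i : Fin n) : jord (ebS i) (ebS i) = (2:ℂ) • ebS i := by
  apply Subtype.ext
  show Matrix.single i i (1:ℂ) * Matrix.single i i 1 +
      Matrix.single i i 1 * Matrix.single i i 1 = (2:ℂ) • Matrix.single i i 1
  rw [std_mul_same', Matrix.smul_single, ← Matrix.single_add]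
  norm_num

lemma jord_ee_ne {n : ℕ} {i j : Fin n} (h : i ≠ j) : jord (ebS i) (ebS j) = 0 := by
  apply Subtype.ext
  show Matrix.single i i (1:ℂ) * Matrix.single j j 1 +
      Matrix.single j j 1 * Matrix.single i i 1 = (0 : Matrix (Fin n) (Fin n) ℂ)
  rw [std_mul_ne' _ _ _ _ h, std_mul_ne' _ _ _ _ (Ne.symm h), add_zero]

lemma jord_es {n : ℕ} {i j : Fin n} (h : i ≠ j) : jord (ebS i) (sbe i j) = sbe i j := by
  apply Subtype.ext
  show Matrix.single i i (1:ℂ) * (Matrix.single i j 1 + Matrix.single j i 1) +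
      (Matrix.single i j 1 + Matrix.single j i 1) * Matrix.single i i 1 =
      Matrix.single i j 1 + Matrix.single j i 1
  rw [mul_add, add_mul, std_mul_same', std_mul_ne' _ _ _ _ h, std_mul_ne' _ _ _ _ (Ne.symm h),
    std_mul_same', add_zero, zero_add]

lemma jord_es0 {n : ℕ} {i j k : Fin n} (hki : k ≠ i) (hkj : k ≠ j) :
    jord (ebS k) (sbe i j) = 0 := by
  apply Subtype.ext
  show Matrix.single k k (1:ℂ) * (Matrix.single i j 1 + Matrix.single j i 1) +
      (Matrix.single i j 1 + Matrix.single j i 1) * Matrix.single k k 1 =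
      (0 : Matrix (Fin n) (Fin n) ℂ)
  rw [mul_add, add_mul, std_mul_ne' _ _ _ _ hki, std_mul_ne' _ _ _ _ hkj,
    std_mul_ne' _ _ _ _ (Ne.symm hkj), std_mul_ne' _ _ _ _ (Ne.symm hki)]
  simp

lemma jord_ss {n : ℕ} {i j : Fin n} (h : i ≠ j) :
    jord (sbe i j) (sbe i j) = (2:ℂ) • (ebS i + ebS j) := by
  apply Subtype.ext
  show (Matrix.single i j (1:ℂ) + Matrix.single j i 1) *
      (Matrix.single i j 1 + Matrix.single j i 1) +
      (Matrix.single i j 1 + Matrix.single j i 1) *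
      (Matrix.single i j 1 + Matrix.single j i 1) =
      (2:ℂ) • ((Matrix.single i i 1 : Matrix (Fin n) (Fin n) ℂ) + Matrix.single j j 1)
  simp only [mul_add, add_mul, std_mul_same', std_mul_ne' _ _ _ _ h,
    std_mul_ne' _ _ _ _ (Ne.symm h), add_zero, zero_add, smul_add]
  rw [Matrix.smul_single, Matrix.smul_single, smul_eq_mul, mul_one,
    show (2:ℂ) = 1 + 1 from by norm_num, Matrix.single_add, Matrix.single_add]
  abel

lemma jord_sss {n : ℕ} {i j l : Fin n} (hij : i ≠ j) (hjl : j ≠ l) (hil : i ≠ l) :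
    jord (sbe i j) (sbe j l) = sbe i l := by
  apply Subtype.ext
  show (Matrix.single i j (1:ℂ) + Matrix.single j i 1) *
      (Matrix.single j l 1 + Matrix.single l j 1) +
      (Matrix.single j l 1 + Matrix.single l j 1) *
      (Matrix.single i j 1 + Matrix.single j i 1) =
      Matrix.single i l 1 + Matrix.single l i 1
  simp only [mul_add, add_mul, std_mul_same', std_mul_ne' _ _ _ _ hij,
    std_mul_ne' _ _ _ _ (Ne.symm hij), std_mul_ne' _ _ _ _ hjl,
    std_mul_ne' _ _ _ _ (Ne.symm hjl), std_mul_ne' _ _ _ _ hil,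
    std_mul_ne' _ _ _ _ (Ne.symm hil), add_zero, zero_add]


lemma half_two {M : Type*} [AddCommGroup M] [Module ℂ M] (a : M) :
    (1/2 : ℂ) • (a + a) = a := by
  rw [← two_smul ℂ a, smul_smul]
  norm_num

lemma half_absorb {M : Type*} [AddCommGroup M] [Module ℂ M] {a b : M}
    (h : a = (1/2:ℂ) • (b + a)) : b = a := by
  have h2 : (2:ℂ) • a = b + a := by
    conv_lhs => rw [h]
    rw [smul_smul]
    norm_num
  rw [two_smul] at h2
  exact (add_right_cancel h2.symm)

lemma cancel_two {M : Type*} [AddCommGroup M] [Module ℂ M] [NoZeroSMulDivisors ℂ M] {a b : M}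
    (h : (2:ℂ) • a = (2:ℂ) • b) : a = b :=
  smul_right_injective M (by norm_num : (2:ℂ) ≠ 0) h

lemma proj_sandwich {N : ℕ} {P Q X : Matrix (Fin N) (Fin N) ℂ} (hP : P*P = P) (hQ : Q*Q = Q)
    (h : X = (1/2:ℂ) • (X*Q + P*X)) : P*X = X ∧ X*Q = X := by
  have h1 : P*X = (1/2:ℂ) • (P*X*Q + P*X) := by
    conv_lhs => rw [h]
    rw [Matrix.mul_smul, mul_add, ← mul_assoc, ← mul_assoc, hP]
  have hPXQ : P*X*Q = P*X := half_absorb h1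
  have h2 : X*Q = (1/2:ℂ) • (P*X*Q + X*Q) := by
    conv_lhs => rw [h]
    rw [Matrix.smul_mul, add_mul, mul_assoc X Q Q, hQ, add_comm]
  have hPXQ2 : P*X*Q = X*Q := half_absorb h2
  have hPX_eq : X*Q = P*X := by rw [← hPXQ2, hPXQ]
  have hX : P*X = X := by
    conv_rhs => rw [h, hPX_eq, half_two]
  exact ⟨hX, by rw [hPX_eq, hX]⟩


lemma mulVec_sum_smul {N m : ℕ} (e : Matrix (Fin N) (Fin N) ℂ) (x : Fin m → ℂ)
    (g : Fin m → (Fin N → ℂ)) :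
    e *ᵥ (∑ b, x b • g b) = ∑ b, x b • (e *ᵥ g b) := by
  calc e *ᵥ (∑ b, x b • g b) = e.mulVecLin (∑ b, x b • g b) := rfl
    _ = ∑ b, e.mulVecLin (x b • g b) := map_sum _ _ _
    _ = ∑ b, x b • (e *ᵥ g b) := by
        refine Finset.sum_congr rfl fun b _ => ?_
        rw [LinearMap.map_smul]
        rfl

lemma dot_sum_smul {N m : ℕ} (y : Fin N → ℂ) (x : Fin m → ℂ) (g : Fin m → (Fin N → ℂ)) :
    y ⬝ᵥ (∑ b, x b • g b) = ∑ b, x b * (y ⬝ᵥ g b) := by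
  simp only [dotProduct, Finset.sum_apply, Pi.smul_apply, smul_eq_mul, Finset.mul_sum]
  rw [Finset.sum_comm]
  exact Finset.sum_congr rfl fun b _ => Finset.sum_congr rfl fun r _ => by ring

lemma sum_smul_dot {N m : ℕ} (y : Fin N → ℂ) (x : Fin m → ℂ) (g : Fin m → (Fin N → ℂ)) :
    (∑ b, x b • g b) ⬝ᵥ y = ∑ b, x b * (g b ⬝ᵥ y) := by
  simp only [dotProduct, Finset.sum_apply, Pi.smul_apply, smul_eq_mul, Finset.sum_mul,
    Finset.mul_sum]
  rw [Finset.sum_comm]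
  exact Finset.sum_congr rfl fun b _ => Finset.sum_congr rfl fun r _ => by ring


lemma mul_outer_mul_apply {N : ℕ} (X Y : Matrix (Fin N) (Fin N) ℂ) (va : Fin N → ℂ)
    (r c : Fin N) :
    (X * Matrix.of (fun p q => va p * star (va q)) * Y) r c
      = (X *ᵥ va) r * (∑ t, star (va t) * Y t c) := by
  rw [Matrix.mul_apply]
  have h1 : ∀ t, (X * Matrix.of (fun p q => va p * star (va q))) r t
      = (X *ᵥ va) r * star (va t) := by
    intro t
    rw [Matrix.mul_apply]
    calc (∑ s, X r s * Matrix.of (fun p q => va p * star (va q)) s t)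
        = (∑ s, X r s * va s) * star (va t) := by
          rw [Finset.sum_mul]
          exact Finset.sum_congr rfl fun s _ => by simp only [Matrix.of_apply]; ring
      _ = (X *ᵥ va) r * star (va t) := rfl
  calc (∑ t, (X * Matrix.of (fun p q => va p * star (va q))) r t * Y t c)
      = ∑ t, ((X *ᵥ va) r * star (va t)) * Y t c :=
        Finset.sum_congr rfl fun t _ => by rw [h1 t]
    _ = (X *ᵥ va) r * (∑ t, star (va t) * Y t c) := by
        rw [Finset.mul_sum]
        exact Finset.sum_congr rfl fun t _ => by ring

lemma symmetrize_sum {n : ℕ} {M : Type*} [AddCommGroup M] [Module ℂ M]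
    (A : Matrix (Fin n) (Fin n) ℂ) (hA : Aᵀ = A) (E : Fin n → Fin n → M) :
    ∑ i, ∑ j, A i j • ((1/2:ℂ) • (E i j + E j i)) = ∑ i, ∑ j, A i j • E i j := by
  have hsym : ∀ i j, A j i = A i j := by
    intro i j
    conv_rhs => rw [← hA]
    rfl
  have h2 : (∑ i, ∑ j, A i j • E j i) = ∑ i, ∑ j, A i j • E i j := by
    rw [Finset.sum_comm]
    refine Finset.sum_congr rfl fun j _ => Finset.sum_congr rfl fun i _ => ?_
    rw [hsym j i]
  have h1 : ∀ i j, A i j • ((1/2:ℂ) • (E i j + E j i)) =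
      (1/2:ℂ) • (A i j • E i j + A i j • E j i) := by
    intro i j
    rw [smul_comm, smul_add]
  calc ∑ i, ∑ j, A i j • ((1/2:ℂ) • (E i j + E j i))
      = ∑ i, ∑ j, (1/2:ℂ) • (A i j • E i j + A i j • E j i) := by
        refine Finset.sum_congr rfl fun i _ => Finset.sum_congr rfl fun j _ => h1 i j
    _ = (1/2:ℂ) • ((∑ i, ∑ j, A i j • E i j) + ∑ i, ∑ j, A i j • E j i) := by
        have step1 : ∀ i : Fin n, ∑ j, (1/2:ℂ) • (A i j • E i j + A i j • E j i) =
            (1/2:ℂ) • ((∑ j, A i j • E i j) + ∑ j, A i j • E j i) := by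
          intro i
          rw [← Finset.smul_sum, Finset.sum_add_distrib]
        rw [Finset.sum_congr rfl fun i _ => step1 i, ← Finset.smul_sum,
          Finset.sum_add_distrib]
    _ = ∑ i, ∑ j, A i j • E i j := by rw [h2, half_two]

lemma symm_decomp {n : ℕ} (A : Matrix (Fin n) (Fin n) ℂ) (hA : Aᵀ = A) :
    A = ∑ i, ∑ j, A i j • ((1/2:ℂ) • (Matrix.single i j (1:ℂ) + Matrix.single j i 1)) := by
  rw [symmetrize_sum A hA]
  conv_lhs => rw [Matrix.matrix_eq_sum_single A]
  refine Finset.sum_congr rfl fun i _ => Finset.sum_congr rfl fun j _ => ?_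
  rw [Matrix.smul_single, smul_eq_mul, mul_one]

end TripleAux

set_option maxHeartbeats 1000000 in
open TripleAux in
/-- a triple morphism from symmetric `n × n` matrices to skew-symmetric
`N × N` matrices has even multiplicity: up to unitaries it is `A ↦ diag_{2k}(A) ⊕ 0`. -/
theorem triple_morphism_symm_to_skew_even (n N : ℕ) (hn : 2 ≤ n)
    (φ : symmSub n →ₗ[ℂ] skewSub N)
    (hφ : ∀ x y z w : symmSub n,
      (w : Matrix (Fin n) (Fin n) ℂ) =
        (1/2 : ℂ) • ((x : Matrix (Fin n) (Fin n) ℂ) * (y : Matrix (Fin n) (Fin n) ℂ)ᴴ *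
            (z : Matrix (Fin n) (Fin n) ℂ) +
          (z : Matrix (Fin n) (Fin n) ℂ) * (y : Matrix (Fin n) (Fin n) ℂ)ᴴ *
            (x : Matrix (Fin n) (Fin n) ℂ)) →
      (φ w : Matrix (Fin N) (Fin N) ℂ) =
        (1/2 : ℂ) • ((φ x : Matrix (Fin N) (Fin N) ℂ) * (φ y : Matrix (Fin N) (Fin N) ℂ)ᴴ *
            (φ z : Matrix (Fin N) (Fin N) ℂ) +
          (φ z : Matrix (Fin N) (Fin N) ℂ) * (φ y : Matrix (Fin N) (Fin N) ℂ)ᴴ *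
            (φ x : Matrix (Fin N) (Fin N) ℂ))) :
    ∃ k : ℕ, 2 * k * n ≤ N ∧
      ∃ U ∈ Matrix.unitaryGroup (Fin N) ℂ, ∃ V ∈ Matrix.unitaryGroup (Fin N) ℂ,
        ∀ A : symmSub n,
          (φ A : Matrix (Fin N) (Fin N) ℂ) =
            U * diagPad N N (2 * k) (A : Matrix (Fin n) (Fin n) ℂ) * V := by
  classical
  have hn0 : 0 < n := by omega
  let Φ : symmSub n →ₗ[ℂ] Matrix (Fin N) (Fin N) ℂ := (skewSub N).subtype.comp φ
  have hΦ : ∀ x y z w : symmSub n,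
      (w : Matrix (Fin n) (Fin n) ℂ) =
        (1/2 : ℂ) • ((x : Matrix (Fin n) (Fin n) ℂ) * (y : Matrix (Fin n) (Fin n) ℂ)ᴴ *
            (z : Matrix (Fin n) (Fin n) ℂ) +
          (z : Matrix (Fin n) (Fin n) ℂ) * (y : Matrix (Fin n) (Fin n) ℂ)ᴴ *
            (x : Matrix (Fin n) (Fin n) ℂ)) →
      Φ w = (1/2 : ℂ) • (Φ x * (Φ y)ᴴ * Φ z + Φ z * (Φ y)ᴴ * Φ x) := hφ
  have hskew : ∀ A : symmSub n, (Φ A)ᵀ = -(Φ A) := fun A => (φ A).2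
  set e : Matrix (Fin N) (Fin N) ℂ := Φ (oneS n) with he
  have hone : ((oneS n : symmSub n) : Matrix (Fin n) (Fin n) ℂ) = 1 := rfl
  have h0one : ((oneS n : symmSub n) : Matrix (Fin n) (Fin n) ℂ) =
      (1/2 : ℂ) • ((oneS n : Matrix (Fin n) (Fin n) ℂ) * (oneS n : Matrix (Fin n) (Fin n) ℂ)ᴴ *
          (oneS n : Matrix (Fin n) (Fin n) ℂ) +
        (oneS n : Matrix (Fin n) (Fin n) ℂ) * (oneS n : Matrix (Fin n) (Fin n) ℂ)ᴴ *
          (oneS n : Matrix (Fin n) (Fin n) ℂ)) := by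
    rw [hone, Matrix.conjTranspose_one]
    simp only [mul_one, one_mul]
    exact (half_two _).symm
  have htri : e * eᴴ * e = e := by
    have h1 := hΦ (oneS n) (oneS n) (oneS n) (oneS n) h0one
    rw [← he] at h1
    conv_rhs => rw [h1]
    exact (half_two _).symm
  have hPP : (e*eᴴ)*(e*eᴴ) = e*eᴴ := by
    calc (e*eᴴ)*(e*eᴴ) = (e*eᴴ*e)*eᴴ := by noncomm_ring
      _ = e*eᴴ := by rw [htri]
  have hQQ : (eᴴ*e)*(eᴴ*e) = eᴴ*e := by
    calc (eᴴ*e)*(eᴴ*e) = eᴴ*(e*eᴴ*e) := by noncomm_ring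
      _ = eᴴ*e := by rw [htri]
  have habs : ∀ A : symmSub n, (e*eᴴ) * Φ A = Φ A ∧ Φ A * (eᴴ*e) = Φ A := by
    intro A
    have h0A : ((A : symmSub n) : Matrix (Fin n) (Fin n) ℂ) =
        (1/2 : ℂ) • ((A : Matrix (Fin n) (Fin n) ℂ) * (oneS n : Matrix (Fin n) (Fin n) ℂ)ᴴ *
            (oneS n : Matrix (Fin n) (Fin n) ℂ) +
          (oneS n : Matrix (Fin n) (Fin n) ℂ) * (oneS n : Matrix (Fin n) (Fin n) ℂ)ᴴ *
            (A : Matrix (Fin n) (Fin n) ℂ)) := by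
      rw [hone, Matrix.conjTranspose_one]
      simp only [mul_one, one_mul]
      exact (half_two _).symm
    have h1 := hΦ A (oneS n) (oneS n) A h0A
    rw [← he] at h1
    have hassoc : Φ A * eᴴ * e + e * eᴴ * Φ A = Φ A * (eᴴ*e) + (e*eᴴ) * Φ A := by noncomm_ring
    have h2 : Φ A = (1/2:ℂ) • (Φ A * (eᴴ*e) + (e*eᴴ) * Φ A) := by
      conv_lhs => rw [h1]
      rw [hassoc]
    exact proj_sandwich hPP hQQ h2
  set ψ : symmSub n → Matrix (Fin N) (Fin N) ℂ := fun A => eᴴ * Φ A with hψdef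
  have hψadd : ∀ A B, ψ (A + B) = ψ A + ψ B := by
    intro A B
    show eᴴ * Φ (A+B) = eᴴ * Φ A + eᴴ * Φ B
    rw [Φ.map_add, mul_add]
  have hψsmul : ∀ (c : ℂ) A, ψ (c • A) = c • ψ A := by
    intro c A
    show eᴴ * Φ (c • A) = c • (eᴴ * Φ A)
    rw [Φ.map_smul, Matrix.mul_smul]
  have hψ0 : ψ 0 = 0 := by
    show eᴴ * Φ 0 = 0
    rw [Φ.map_zero, mul_zero]
  have hJ : ∀ A B : symmSub n, ψ (jord A B) = ψ A * ψ B + ψ B * ψ A := by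
    intro A B
    have h0 : (((1/2:ℂ) • jord A B : symmSub n) : Matrix (Fin n) (Fin n) ℂ) =
        (1/2 : ℂ) • ((A : Matrix (Fin n) (Fin n) ℂ) * (oneS n : Matrix (Fin n) (Fin n) ℂ)ᴴ *
            (B : Matrix (Fin n) (Fin n) ℂ) +
          (B : Matrix (Fin n) (Fin n) ℂ) * (oneS n : Matrix (Fin n) (Fin n) ℂ)ᴴ *
            (A : Matrix (Fin n) (Fin n) ℂ)) := by
      rw [Submodule.coe_smul, hone, Matrix.conjTranspose_one]
      simp only [mul_one]
      rfl
    have h1 := hΦ A (oneS n) B ((1/2:ℂ) • jord A B) h0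
    rw [← he] at h1
    rw [Φ.map_smul] at h1
    have h2 : Φ (jord A B) = Φ A * eᴴ * Φ B + Φ B * eᴴ * Φ A :=
      smul_right_injective _ (show (1/2:ℂ) ≠ 0 by norm_num) h1
    show eᴴ * Φ (jord A B) = (eᴴ * Φ A) * (eᴴ * Φ B) + (eᴴ * Φ B) * (eᴴ * Φ A)
    rw [h2]
    noncomm_ring
  have hherm : ∀ A : symmSub n, ((A : Matrix (Fin n) (Fin n) ℂ))ᴴ = (A : Matrix (Fin n) (Fin n) ℂ)
      → (ψ A)ᴴ = ψ A := by
    intro A hreal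
    have h0 : ((A : symmSub n) : Matrix (Fin n) (Fin n) ℂ) =
        (1/2 : ℂ) • ((oneS n : Matrix (Fin n) (Fin n) ℂ) * (A : Matrix (Fin n) (Fin n) ℂ)ᴴ *
            (oneS n : Matrix (Fin n) (Fin n) ℂ) +
          (oneS n : Matrix (Fin n) (Fin n) ℂ) * (A : Matrix (Fin n) (Fin n) ℂ)ᴴ *
            (oneS n : Matrix (Fin n) (Fin n) ℂ)) := by
      rw [hone, hreal]
      simp only [mul_one, one_mul]
      exact (half_two _).symm
    have h1 := hΦ (oneS n) A (oneS n) A h0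
    rw [← he] at h1
    have h2 : Φ A = e * (Φ A)ᴴ * e := by
      conv_lhs => rw [h1, half_two]
    have h6 : (eᴴ*e) * (Φ A)ᴴ = (Φ A)ᴴ := by
      have h7 := congrArg Matrix.conjTranspose (habs A).2
      simpa [Matrix.conjTranspose_mul, Matrix.conjTranspose_conjTranspose, mul_assoc] using h7
    have h3 : eᴴ * Φ A = (Φ A)ᴴ * e := by
      conv_lhs => rw [h2]
      calc eᴴ * (e * (Φ A)ᴴ * e) = ((eᴴ*e) * (Φ A)ᴴ) * e := by noncomm_ring
        _ = (Φ A)ᴴ * e := by rw [h6]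
    show (eᴴ * Φ A)ᴴ = eᴴ * Φ A
    rw [Matrix.conjTranspose_mul, Matrix.conjTranspose_conjTranspose, ← h3]
  set d : Fin n → Matrix (Fin N) (Fin N) ℂ := fun i => ψ (ebS i) with hd
  set f : Fin n → Fin n → Matrix (Fin N) (Fin N) ℂ := fun i j => ψ (sbe i j) with hf
  have f1 : ∀ i, d i * d i = d i := by
    intro i
    have h1 := hJ (ebS i) (ebS i)
    rw [jord_ee_same, hψsmul] at h1
    have h2 : (2:ℂ) • d i = (2:ℂ) • (d i * d i) := h1.trans (two_smul ℂ _).symm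
    exact (cancel_two h2).symm
  have f2 : ∀ i j, i ≠ j → d i * d j = 0 ∧ d j * d i = 0 := by
    intro i j hij
    have h1 := hJ (ebS i) (ebS j)
    rw [jord_ee_ne hij, hψ0] at h1
    have h2 := proj_absorb (f1 i) h1.symm
    exact h2
  have f3 : ∀ i j, i ≠ j → d i * f i j + f i j * d i = f i j := by
    intro i j hij
    have h1 := hJ (ebS i) (sbe i j)
    rw [jord_es hij] at h1
    exact h1.symm
  have f4 : ∀ i j k, k ≠ i → k ≠ j → d k * f i j = 0 ∧ f i j * d k = 0 := by
    intro i j k hki hkj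
    have h1 := hJ (ebS k) (sbe i j)
    rw [jord_es0 hki hkj, hψ0] at h1
    exact proj_absorb (f1 k) h1.symm
  have f5 : ∀ i j, i ≠ j → f i j * f i j = d i + d j := by
    intro i j hij
    have h1 := hJ (sbe i j) (sbe i j)
    rw [jord_ss hij, hψsmul, hψadd] at h1
    have h2 : (2:ℂ) • (d i + d j) = (2:ℂ) • (f i j * f i j) := h1.trans (two_smul ℂ _).symm
    exact (cancel_two h2).symm
  have f6 : ∀ i j l, i ≠ j → j ≠ l → i ≠ l →
      f i j * f j l + f j l * f i j = f i l := by
    intro i j l hij hjl hil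
    have h1 := hJ (sbe i j) (sbe j l)
    rw [jord_sss hij hjl hil] at h1
    exact h1.symm
  have f7d : ∀ i, (d i)ᴴ = d i := by
    intro i
    refine hherm (ebS i) ?_
    show (Matrix.single i i (1:ℂ))ᴴ = Matrix.single i i 1
    rw [std_conjT]
  have f7f : ∀ i j, (f i j)ᴴ = f i j := by
    intro i j
    refine hherm (sbe i j) ?_
    show (Matrix.single i j (1:ℂ) + Matrix.single j i 1)ᴴ =
      Matrix.single i j 1 + Matrix.single j i 1
    rw [Matrix.conjTranspose_add, std_conjT, std_conjT, add_comm]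
  have f8 : ∀ i j, f i j = f j i := by
    intro i j
    show ψ (sbe i j) = ψ (sbe j i)
    rw [sbe_comm]
  have f9 : ∀ A : symmSub n, (eᴴ*e) * ψ A = ψ A ∧ ψ A * (eᴴ*e) = ψ A := by
    intro A
    constructor
    · show (eᴴ*e) * (eᴴ * Φ A) = eᴴ * Φ A
      have heH : eᴴ*e*eᴴ = eᴴ := by
        calc eᴴ*e*eᴴ = (e*eᴴ*e)ᴴ := by
              rw [Matrix.conjTranspose_mul, Matrix.conjTranspose_mul,
                Matrix.conjTranspose_conjTranspose]
              noncomm_ring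
          _ = eᴴ := by rw [htri]
      calc (eᴴ*e) * (eᴴ * Φ A) = (eᴴ*e*eᴴ) * Φ A := by noncomm_ring
        _ = eᴴ * Φ A := by rw [heH]
    · show (eᴴ * Φ A) * (eᴴ*e) = eᴴ * Φ A
      rw [mul_assoc, (habs A).2]
  have f10 : ∑ k, d k = eᴴ * e := by
    have h1 : ∑ k, ψ (ebS k) = ψ (∑ k, ebS k) := by
      show _ = eᴴ * Φ (∑ k, ebS k)
      rw [_root_.map_sum, Finset.mul_sum]
    have h2 : ψ (∑ k, ebS k) = eᴴ * e := by
      rw [sum_ebS]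
    exact h1.trans h2
  have f3' : ∀ i j, i ≠ j → d j * f i j + f i j * d j = f i j := by
    intro i j hij
    have := f3 j i (Ne.symm hij)
    rwa [← f8] at this
  have f11 : ∀ i j, i ≠ j → d i * f i j * d i = 0 := by
    intro i j hij
    have h1 : f i j * d i = f i j - d i * f i j := by
      have := f3 i j hij
      rw [eq_sub_iff_add_eq, add_comm]
      exact this
    calc d i * f i j * d i = d i * (f i j * d i) := mul_assoc _ _ _
      _ = d i * (f i j - d i * f i j) := by rw [h1]
      _ = d i * f i j - d i * (d i * f i j) := by rw [mul_sub]
      _ = d i * f i j - (d i * d i) * f i j := by rw [← mul_assoc (d i) (d i) (f i j)]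
      _ = 0 := by rw [f1, sub_self]
  have f11' : ∀ i j, i ≠ j → d j * f i j * d j = 0 := by
    intro i j hij
    have h1 : f i j * d j = f i j - d j * f i j := by
      have := f3' i j hij
      rw [eq_sub_iff_add_eq, add_comm]
      exact this
    calc d j * f i j * d j = d j * (f i j * d j) := mul_assoc _ _ _
      _ = d j * (f i j - d j * f i j) := by rw [h1]
      _ = d j * f i j - d j * (d j * f i j) := by rw [mul_sub]
      _ = d j * f i j - (d j * d j) * f i j := by rw [← mul_assoc (d j) (d j) (f i j)]
      _ = 0 := by rw [f1, sub_self]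
  have f12 : ∀ i j, i ≠ j → f i j = d i * f i j + d j * f i j := by
    intro i j hij
    have h1 : f i j = (∑ k, d k) * f i j := by
      rw [f10]
      exact ((f9 (sbe i j)).1).symm
    rw [Finset.sum_mul] at h1
    have h2 : ∑ k, d k * f i j = ∑ k ∈ ({i, j} : Finset (Fin n)), d k * f i j := by
      symm
      apply Finset.sum_subset (Finset.subset_univ _)
      intro k _ hk
      simp only [Finset.mem_insert, Finset.mem_singleton] at hk
      push_neg at hk
      exact (f4 i j k hk.1 hk.2).1
    conv_lhs => rw [h1, h2, Finset.sum_pair hij]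
  have f12' : ∀ i j, i ≠ j → f i j = f i j * d i + f i j * d j := by
    intro i j hij
    have h1 : f i j = f i j * (∑ k, d k) := by
      rw [f10]
      exact ((f9 (sbe i j)).2).symm
    rw [Finset.mul_sum] at h1
    have h2 : ∑ k, f i j * d k = ∑ k ∈ ({i, j} : Finset (Fin n)), f i j * d k := by
      symm
      apply Finset.sum_subset (Finset.subset_univ _)
      intro k _ hk
      simp only [Finset.mem_insert, Finset.mem_singleton] at hk
      push_neg at hk
      exact (f4 i j k hk.1 hk.2).2
    conv_lhs => rw [h1, h2, Finset.sum_pair hij]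
  have f13 : ∀ i j, i ≠ j → d j * f i j = f i j * d i := by
    intro i j hij
    have h1 : d j * f i j = d j * f i j * d i := by
      conv_lhs => rw [f12' i j hij]
      rw [mul_add, ← mul_assoc (d j) (f i j) (d i), ← mul_assoc (d j) (f i j) (d j),
        f11' i j hij, add_zero]
    have h2 : f i j * d i = d j * f i j * d i := by
      conv_lhs => rw [f12 i j hij]
      rw [add_mul, f11 i j hij, zero_add]
    rw [h1, ← h2]
  have f14 : ∀ i j, i ≠ j → d i * f i j * d j = d i * f i j := by
    intro i j hij
    have h1 : f i j * d j = f i j - f i j * d i := by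
      have := f12' i j hij
      rw [eq_sub_iff_add_eq, add_comm]
      exact this.symm
    calc d i * f i j * d j = d i * (f i j * d j) := mul_assoc _ _ _
      _ = d i * (f i j - f i j * d i) := by rw [h1]
      _ = d i * f i j - d i * (f i j * d i) := by rw [mul_sub]
      _ = d i * f i j - d i * f i j * d i := by rw [← mul_assoc (d i) (f i j) (d i)]
      _ = d i * f i j := by rw [f11 i j hij, sub_zero]
  set E : Fin n → Fin n → Matrix (Fin N) (Fin N) ℂ :=
    fun i j => if i = j then d i else d i * f i j with hE
  have hEdiag : ∀ i, E i i = d i := by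
    intro i
    show (if i = i then d i else d i * f i i) = d i
    rw [if_pos rfl]
  have hEne : ∀ i j, i ≠ j → E i j = d i * f i j := by
    intro i j h
    show (if i = j then d i else d i * f i j) = d i * f i j
    rw [if_neg h]
  have Emul : ∀ i j k l, E i j * E k l = if j = k then E i l else 0 := by
    intro i j k l
    by_cases hij : i = j
    · subst hij
      by_cases hkl : k = l
      · subst hkl
        rw [hEdiag, hEdiag]
        by_cases hik : i = k
        · subst hik
          rw [if_pos rfl, hEdiag]
          exact f1 i
        · rw [if_neg hik, (f2 i k hik).1]
      · rw [hEdiag, hEne k l hkl]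
        by_cases hik : i = k
        · subst hik
          rw [if_pos rfl, hEne i l hkl, ← mul_assoc (d i) (d i) (f i l), f1]
        · rw [if_neg hik, ← mul_assoc (d i) (d k) (f k l), (f2 i k hik).1, zero_mul]
    · rw [hEne i j hij]
      by_cases hkl : k = l
      · subst hkl
        rw [hEdiag]
        by_cases hjk : j = k
        · subst hjk
          rw [if_pos rfl, hEne i j hij]
          exact f14 i j hij
        · rw [if_neg hjk]
          by_cases hki : k = i
          · subst hki
            exact f11 k j hij
          · rw [mul_assoc (d i) (f i j) (d k), (f4 i j k hki (fun h => hjk h.symm)).2, mul_zero]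
      · rw [hEne k l hkl]
        by_cases hjk : j = k
        · subst hjk
          rw [if_pos rfl]
          by_cases hli : l = i
          · subst hli
            rw [hEdiag]
            calc (d l * f l j) * (d j * f j l)
                = ((d l * f l j) * d j) * f j l := by
                  rw [← mul_assoc (d l * f l j) (d j) (f j l)]
              _ = (d l * f l j) * f j l := by rw [f14 l j hij]
              _ = d l * (f l j * f j l) := by rw [mul_assoc (d l) (f l j) (f j l)]
              _ = d l * (f l j * f l j) := by rw [← f8 l j]
              _ = d l * (d l + d j) := by rw [f5 l j hij]
              _ = d l := by rw [mul_add, f1, (f2 l j hij).1, add_zero]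
          · have hil : i ≠ l := fun h => hli h.symm
            rw [hEne i l hil]
            have hsub : f i j * f j l = f i l - f j l * f i j := by
              rw [eq_sub_iff_add_eq]
              exact f6 i j l hij hkl hil
            calc (d i * f i j) * (d j * f j l)
                = ((d i * f i j) * d j) * f j l := by
                  rw [← mul_assoc (d i * f i j) (d j) (f j l)]
              _ = (d i * f i j) * f j l := by rw [f14 i j hij]
              _ = d i * (f i j * f j l) := by rw [mul_assoc (d i) (f i j) (f j l)]
              _ = d i * (f i l - f j l * f i j) := by rw [hsub]
              _ = d i * f i l - d i * (f j l * f i j) := by rw [mul_sub]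
              _ = d i * f i l - (d i * f j l) * f i j := by
                  rw [← mul_assoc (d i) (f j l) (f i j)]
              _ = d i * f i l := by rw [(f4 j l i hij hil).1, zero_mul, sub_zero]
        · rw [if_neg hjk]
          by_cases hki : k = i
          · subst hki
            rw [← mul_assoc (d k * f k j) (d k) (f k l), f11 k j hij, zero_mul]
          · rw [← mul_assoc (d i * f i j) (d k) (f k l), mul_assoc (d i) (f i j) (d k),
              (f4 i j k hki (fun h => hjk h.symm)).2, mul_zero, zero_mul]
  have Estar : ∀ i j, (E i j)ᴴ = E j i := by
    intro i j
    by_cases hij : i = j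
    · subst hij
      rw [hEdiag]
      exact f7d i
    · rw [hEne i j hij, hEne j i (Ne.symm hij), Matrix.conjTranspose_mul, f7f, f7d, ← f8 i j]
      exact (f13 i j hij).symm
  have hsbeE : ∀ i j, ψ (sbe i j) = E i j + E j i := by
    intro i j
    by_cases hij : i = j
    · subst hij
      rw [sbe_diag i, hψsmul, hEdiag]
      exact two_smul ℂ (d i)
    · rw [hEne i j hij, hEne j i (Ne.symm hij), ← f8 i j]
      exact f12 i j hij
  have hψsum : ∀ (g : Fin n → symmSub n),
      ψ (∑ x, g x) = ∑ x, ψ (g x) := by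
    intro g
    show eᴴ * Φ (∑ x, g x) = _
    rw [_root_.map_sum, Finset.mul_sum]
  have hrep : ∀ A : symmSub n,
      ψ A = ∑ i, ∑ j, (A : Matrix (Fin n) (Fin n) ℂ) i j • E i j := by
    intro A
    have hA : ((A : Matrix (Fin n) (Fin n) ℂ))ᵀ = (A : Matrix (Fin n) (Fin n) ℂ) := A.2
    have hdecomp : A = ∑ i, ∑ j,
        ((A : Matrix (Fin n) (Fin n) ℂ) i j) • ((1/2:ℂ) • sbe i j) := by
      apply Subtype.ext
      simp only [AddSubmonoidClass.coe_finset_sum, SetLike.val_smul]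
      exact symm_decomp _ hA
    conv_lhs => rw [hdecomp]
    have hψsum2 : ∀ (g : Fin n → Fin n → symmSub n),
        ψ (∑ i, ∑ j, g i j) = ∑ i, ∑ j, ψ (g i j) := by
      intro g
      rw [hψsum]
      exact Finset.sum_congr rfl fun i _ => hψsum (g i)
    rw [hψsum2]
    have hterm : ∀ i j, ψ ((A : Matrix (Fin n) (Fin n) ℂ) i j • ((1/2:ℂ) • sbe i j)) =
        (A : Matrix (Fin n) (Fin n) ℂ) i j • ((1/2:ℂ) • (E i j + E j i)) := by
      intro i j
      rw [hψsmul, hψsmul, hsbeE]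
    rw [Finset.sum_congr rfl fun i _ => Finset.sum_congr rfl fun j _ => hterm i j]
    exact symmetrize_sum _ hA E
  have hP : ∀ A : symmSub n, Φ A = e * ψ A := by
    intro A
    show Φ A = e * (eᴴ * Φ A)
    rw [← mul_assoc, (habs A).1]
  have hQE : ∀ i j, (eᴴ * e) * E i j = E i j := by
    intro i j
    rw [← f10]
    have h1 : ∀ k : Fin n, d k = E k k := fun k => (hEdiag k).symm
    calc (∑ k, d k) * E i j = ∑ k, d k * E i j := by rw [Finset.sum_mul]
      _ = ∑ k, if k = i then E k j else 0 := by
          refine Finset.sum_congr rfl fun k _ => ?_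
          rw [h1 k, Emul k k i j]
      _ = E i j := by
          rw [Finset.sum_ite_eq' Finset.univ i (fun k => E k j)]
          simp
  have hskew_e : eᵀ = -e := hskew (oneS n)
  set z0 : Fin n := ⟨0, hn0⟩ with hz0
  have hE00idem : E z0 z0 * E z0 z0 = E z0 z0 := by
    have h := Emul z0 z0 z0 z0
    rwa [if_pos rfl] at h
  have hE00herm : (E z0 z0)ᴴ = E z0 z0 := Estar z0 z0
  have hd0E : (E z0 z0)ᵀ * e = e * E z0 z0 := by
    have h1 : Φ (ebS z0) = e * d z0 := hP (ebS z0)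
    have h2 : (e * d z0)ᵀ = -(e * d z0) := by
      rw [← h1]
      exact hskew (ebS z0)
    rw [Matrix.transpose_mul, hskew_e, mul_neg] at h2
    have h3 : (d z0)ᵀ * e = e * d z0 := neg_injective h2
    rw [hEdiag]
    exact h3
  set S : Submodule ℂ (EuclideanSpace ℂ (Fin N)) :=
    { carrier := {z | E z0 z0 *ᵥ z = z}
      add_mem' := by
        intro a b ha hb
        simp only [Set.mem_setOf_eq] at *
        show E z0 z0 *ᵥ ((a : Fin N → ℂ) + b) = (a : Fin N → ℂ) + b
        rw [Matrix.mulVec_add, ha, hb]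
      zero_mem' := by
        show E z0 z0 *ᵥ (0 : Fin N → ℂ) = 0
        rw [Matrix.mulVec_zero]
      smul_mem' := by
        intro c a ha
        simp only [Set.mem_setOf_eq] at *
        show E z0 z0 *ᵥ (c • (a : Fin N → ℂ)) = c • (a : Fin N → ℂ)
        rw [Matrix.mulVec_smul, ha] } with hS
  set m := Module.finrank ℂ S with hm
  let v : OrthonormalBasis (Fin m) ℂ S := stdOrthonormalBasis ℂ S
  set vv : Fin m → (Fin N → ℂ) := fun a => ((v a : EuclideanSpace ℂ (Fin N)) : Fin N → ℂ)
    with hvv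
  have hv_mem : ∀ a, E z0 z0 *ᵥ vv a = vv a := fun a => (v a).2
  have hv_on : ∀ a b, star (vv a) ⬝ᵥ vv b = if a = b then (1:ℂ) else 0 := by
    intro a b
    have h1 := (orthonormal_iff_ite.mp v.orthonormal) a b
    rw [Submodule.coe_inner, PiLp.inner_apply] at h1
    simp only [RCLike.inner_apply'] at h1
    rw [← h1]
    simp [dotProduct]
    rfl
  set u : Fin m → Fin n → (Fin N → ℂ) := fun a i => E i z0 *ᵥ vv a with hu
  have hES : ∀ i j : Fin n, (E i z0)ᴴ * E j z0 = if i = j then E z0 z0 else 0 := by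
    intro i j
    rw [Estar i z0]
    exact Emul z0 i j z0
  have hu_on : ∀ a i b j, star (u a i) ⬝ᵥ u b j = if a = b ∧ i = j then (1:ℂ) else 0 := by
    intro a i b j
    show star (E i z0 *ᵥ vv a) ⬝ᵥ (E j z0 *ᵥ vv b) = _
    rw [Matrix.star_mulVec, ← Matrix.dotProduct_mulVec, Matrix.mulVec_mulVec, hES i j]
    by_cases hij2 : i = j
    · rw [if_pos hij2]
      rw [hv_mem b, hv_on a b]
      by_cases hab : a = b
      · rw [if_pos hab, if_pos ⟨hab, hij2⟩]
      · rw [if_neg hab, if_neg (fun h => hab h.1)]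
    · rw [if_neg hij2, Matrix.zero_mulVec, dotProduct_zero,
        if_neg (fun h => hij2 h.2)]
  have hu_on2 : ∀ a i b j, (∑ r, (starRingEnd ℂ) (u a i r) * u b j r) =
      if a = b ∧ i = j then (1:ℂ) else 0 := hu_on
  have hmn : m * n ≤ N := by
    set w : Fin m × Fin n → EuclideanSpace ℂ (Fin N) := fun p => WithLp.toLp 2 (u p.1 p.2 : Fin N → ℂ)
      with hwdef
    have hworth : Orthonormal ℂ w := by
      rw [orthonormal_iff_ite]
      intro p q
      calc (inner ℂ (w p) (w q) : ℂ) = star (u p.1 p.2) ⬝ᵥ u q.1 q.2 := by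
            rw [PiLp.inner_apply]
            simp only [RCLike.inner_apply']
            rfl
        _ = if p.1 = q.1 ∧ p.2 = q.2 then (1:ℂ) else 0 := hu_on p.1 p.2 q.1 q.2
        _ = if p = q then (1:ℂ) else 0 := by simp [Prod.ext_iff]
    have hli := hworth.linearIndependent
    have hcard := hli.fintype_card_le_finrank
    rw [Fintype.card_prod, Fintype.card_fin, Fintype.card_fin] at hcard
    rwa [finrank_euclideanSpace_fin] at hcard
  set T : Matrix (Fin m) (Fin m) ℂ :=
    Matrix.of fun a b => vv a ⬝ᵥ (e *ᵥ vv b) with hT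
  have hTskew : ∀ a b, T b a = - T a b := by
    intro a b
    show vv b ⬝ᵥ (e *ᵥ vv a) = -(vv a ⬝ᵥ (e *ᵥ vv b))
    rw [Matrix.dotProduct_mulVec, dotProduct_comm, ← Matrix.mulVec_transpose,
      hskew_e, Matrix.neg_mulVec, dotProduct_neg]
  have hTtrans : Tᵀ = -T := by
    ext a b
    rw [Matrix.transpose_apply, Matrix.neg_apply]
    exact hTskew a b
  have hTinj : ∀ x : Fin m → ℂ, T *ᵥ x = 0 → x = 0 := by
    intro x hx
    set wS : S := ∑ b, x b • v b with hwS
    set w : Fin N → ℂ := ((wS : EuclideanSpace ℂ (Fin N)) : Fin N → ℂ) with hw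
    have hwcoe : w = ∑ b, x b • vv b := by
      rw [hw, hwS]
      show (((∑ b, x b • v b : S) : EuclideanSpace ℂ (Fin N)) : Fin N → ℂ) = _
      simp only [AddSubmonoidClass.coe_finset_sum, SetLike.val_smul, WithLp.ofLp_sum,
        WithLp.ofLp_smul]
      try rfl
    have hw_mem : E z0 z0 *ᵥ w = w := wS.2
    have h1 : ∀ a, vv a ⬝ᵥ (e *ᵥ w) = 0 := by
      intro a
      calc vv a ⬝ᵥ (e *ᵥ w) = ∑ b, x b * (vv a ⬝ᵥ (e *ᵥ vv b)) := by
            rw [hwcoe, mulVec_sum_smul, dot_sum_smul]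
        _ = ∑ b, T a b * x b := by
            refine Finset.sum_congr rfl fun b _ => ?_
            rw [hT, Matrix.of_apply, mul_comm]
        _ = (T *ᵥ x) a := rfl
        _ = 0 := by rw [hx]; rfl
    have h2 : ∀ z : EuclideanSpace ℂ (Fin N), z ∈ S → (z : Fin N → ℂ) ⬝ᵥ (e *ᵥ w) = 0 := by
      intro z hz
      have hrepr := v.sum_repr (⟨z, hz⟩ : S)
      have hzcoe : (z : Fin N → ℂ) = ∑ a, (v.repr (⟨z, hz⟩ : S) a) • vv a := by
        conv_lhs => rw [show z = ((⟨z, hz⟩ : S) : EuclideanSpace ℂ (Fin N)) from rfl, ← hrepr]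
        simp only [AddSubmonoidClass.coe_finset_sum, SetLike.val_smul, WithLp.ofLp_sum,
          WithLp.ofLp_smul]
        try rfl
      rw [hzcoe, sum_smul_dot]
      apply Finset.sum_eq_zero
      intro a _
      rw [h1 a, mul_zero]
    have h3 : ∀ y : Fin N → ℂ, (E z0 z0 *ᵥ y) ⬝ᵥ (e *ᵥ w) = 0 := by
      intro y
      apply h2 (WithLp.toLp 2 (E z0 z0 *ᵥ y))
      show E z0 z0 *ᵥ (E z0 z0 *ᵥ y) = E z0 z0 *ᵥ y
      rw [Matrix.mulVec_mulVec, hE00idem]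
    have h4 : (E z0 z0)ᵀ *ᵥ (e *ᵥ w) = 0 := by
      funext r
      have h5 := h3 (Pi.single r 1)
      rw [Matrix.mulVec_single_one] at h5
      calc ((E z0 z0)ᵀ *ᵥ (e *ᵥ w)) r = ∑ i, E z0 z0 i r * (e *ᵥ w) i := by
            simp [Matrix.mulVec, dotProduct, Matrix.transpose_apply]
        _ = (fun i => E z0 z0 i r * 1) ⬝ᵥ (e *ᵥ w) := by
            simp [dotProduct]
        _ = 0 := by simpa [dotProduct] using h5
    have h5 : e *ᵥ w = 0 := by
      have h6 : (e * E z0 z0) *ᵥ w = 0 := by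
        rw [← hd0E, ← Matrix.mulVec_mulVec]
        exact h4
      calc e *ᵥ w = e *ᵥ (E z0 z0 *ᵥ w) := by rw [hw_mem]
        _ = (e * E z0 z0) *ᵥ w := Matrix.mulVec_mulVec _ _ _
        _ = 0 := h6
    have h7 : w = 0 := by
      have hQw : (eᴴ * e) *ᵥ w = w := by
        calc (eᴴ*e) *ᵥ w = (eᴴ*e) *ᵥ (E z0 z0 *ᵥ w) := by rw [hw_mem]
          _ = ((eᴴ*e) * E z0 z0) *ᵥ w := Matrix.mulVec_mulVec _ _ _
          _ = E z0 z0 *ᵥ w := by rw [hQE z0 z0]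
          _ = w := hw_mem
      calc w = (eᴴ*e) *ᵥ w := hQw.symm
        _ = eᴴ *ᵥ (e *ᵥ w) := (Matrix.mulVec_mulVec _ _ _).symm
        _ = 0 := by rw [h5, Matrix.mulVec_zero]
    have h8 : wS = 0 := Subtype.ext (congrArg (WithLp.toLp 2) h7)
    rw [hwS] at h8
    have h9 := linearIndependent_iff'.mp v.orthonormal.linearIndependent Finset.univ x h8
    funext b
    exact h9 b (Finset.mem_univ b)
  have hmeven : Even m := by
    by_contra hodd
    rw [Nat.not_even_iff_odd] at hodd
    have hdet0 : T.det = 0 := by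
      have h1 : T.det = -T.det := by
        conv_lhs => rw [← Matrix.det_transpose T]
        rw [hTtrans, Matrix.det_neg, Fintype.card_fin, hodd.neg_one_pow, neg_one_mul]
      have h2 : T.det + T.det = 0 := by
        nth_rewrite 2 [h1]
        simp
      exact add_self_eq_zero.mp h2
    obtain ⟨x, hx0, hx⟩ := (Matrix.exists_mulVec_eq_zero_iff).mpr hdet0
    exact hx0 (hTinj x hx)
  obtain ⟨k, hk⟩ := hmeven
  have h2k : 2 * k = m := by omega
  have hexp : ∀ y : Fin N → ℂ, E z0 z0 *ᵥ y = ∑ a, (star (vv a) ⬝ᵥ y) • vv a := by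
    intro y
    have hmem : E z0 z0 *ᵥ (E z0 z0 *ᵥ y) = E z0 z0 *ᵥ y := by
      rw [Matrix.mulVec_mulVec, hE00idem]
    set yS : S := ⟨WithLp.toLp 2 (E z0 z0 *ᵥ y), hmem⟩ with hyS
    have hrepr := v.sum_repr yS
    have hcoef : ∀ a, v.repr yS a = star (vv a) ⬝ᵥ y := by
      intro a
      rw [v.repr_apply_apply, Submodule.coe_inner, PiLp.inner_apply]
      simp only [RCLike.inner_apply']
      have hstep : star (vv a) ⬝ᵥ (E z0 z0 *ᵥ y) = star (vv a) ⬝ᵥ y := by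
        rw [Matrix.dotProduct_mulVec]
        congr 1
        calc star (vv a) ᵥ* E z0 z0 = star (vv a) ᵥ* (E z0 z0)ᴴ := by rw [hE00herm]
          _ = star (E z0 z0 *ᵥ vv a) := (Matrix.star_mulVec _ _).symm
          _ = star (vv a) := by rw [hv_mem a]
      rw [← hstep]
      simp [dotProduct]
      rfl
    calc E z0 z0 *ᵥ y = ((yS : S) : Fin N → ℂ) := rfl
      _ = ((∑ a, v.repr yS a • v a : S) : Fin N → ℂ) := by rw [hrepr]
      _ = ∑ a, v.repr yS a • vv a := by
          simp only [AddSubmonoidClass.coe_finset_sum, SetLike.val_smul, WithLp.ofLp_sum,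
            WithLp.ofLp_smul]
          try rfl
      _ = ∑ a, (star (vv a) ⬝ᵥ y) • vv a :=
          Finset.sum_congr rfl fun a _ => by rw [hcoef a]
  have houter : E z0 z0 = ∑ a, Matrix.of (fun p q => vv a p * star (vv a q)) := by
    ext r c
    have h1 := congrFun (hexp (Pi.single c 1)) r
    simp only [Matrix.mulVec_single_one, Matrix.col_apply, mul_one, Finset.sum_apply, Pi.smul_apply,
      smul_eq_mul, dotProduct_single, Pi.star_apply] at h1
    rw [Matrix.sum_apply, h1]
    refine Finset.sum_congr rfl fun a _ => ?_
    simp only [Matrix.of_apply, Pi.star_apply]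
    ring
  have hidx_lt : ∀ (a : Fin m) (i : Fin n), (a : ℕ) * n + (i : ℕ) < m * n := by
    intro a i
    calc (a:ℕ) * n + (i:ℕ) < (a:ℕ) * n + n := Nat.add_lt_add_left i.2 _
      _ = ((a:ℕ) + 1) * n := by ring
      _ ≤ m * n := Nat.mul_le_mul_right n a.2
  set idx : Fin m → Fin n → Fin N := fun a i =>
    ⟨(a:ℕ) * n + (i:ℕ), lt_of_lt_of_le (hidx_lt a i) hmn⟩ with hidx
  have hidx_val : ∀ a i, ((idx a i : Fin N) : ℕ) = (a:ℕ) * n + (i:ℕ) := fun a i => rfl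
  have hidx_ltmn : ∀ a i, ((idx a i : Fin N) : ℕ) < m * n := fun a i => hidx_lt a i
  set ucol : Fin N → (Fin N → ℂ) := fun c =>
    if h : (c : ℕ) < m * n then
      u ⟨(c:ℕ)/n, (Nat.div_lt_iff_lt_mul hn0).mpr h⟩ ⟨(c:ℕ)%n, Nat.mod_lt _ hn0⟩
    else 0 with hucol
  set uecol : Fin N → (Fin N → ℂ) := fun c =>
    if h : (c : ℕ) < m * n then
      e *ᵥ u ⟨(c:ℕ)/n, (Nat.div_lt_iff_lt_mul hn0).mpr h⟩ ⟨(c:ℕ)%n, Nat.mod_lt _ hn0⟩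
    else 0 with huecol
  have hpair : ∀ c d : Fin N, (c:ℕ) < m*n → (d:ℕ) < m*n →
      (((c:ℕ)/n = (d:ℕ)/n ∧ (c:ℕ)%n = (d:ℕ)%n) ↔ c = d) := by
    intro c d _ _
    constructor
    · rintro ⟨h1, h2⟩
      apply Fin.ext
      have e1 := Nat.div_add_mod (c:ℕ) n
      have e2 := Nat.div_add_mod (d:ℕ) n
      rw [h1, h2] at e1
      omega
    · rintro rfl
      exact ⟨rfl, rfl⟩
  have hQu : ∀ (b : Fin m) (j : Fin n), (eᴴ*e) *ᵥ u b j = u b j := by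
    intro b j
    show (eᴴ*e) *ᵥ (E j z0 *ᵥ vv b) = E j z0 *ᵥ vv b
    rw [Matrix.mulVec_mulVec, hQE j z0]
  have hucol_on : ∀ c d : Fin N, (c:ℕ) < m*n → (d:ℕ) < m*n →
      (∑ r, (starRingEnd ℂ) (ucol c r) * ucol d r) = if c = d then (1:ℂ) else 0 := by
    intro c d hc hd
    simp only [hucol]
    rw [dif_pos hc, dif_pos hd]
    rw [hu_on2]
    have h2 : ((⟨(c:ℕ)/n, (Nat.div_lt_iff_lt_mul hn0).mpr hc⟩ : Fin m) =
          ⟨(d:ℕ)/n, (Nat.div_lt_iff_lt_mul hn0).mpr hd⟩ ∧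
        (⟨(c:ℕ)%n, Nat.mod_lt _ hn0⟩ : Fin n) = ⟨(d:ℕ)%n, Nat.mod_lt _ hn0⟩) ↔ c = d := by
      rw [Fin.mk_eq_mk, Fin.mk_eq_mk]
      exact hpair c d hc hd
    by_cases hcd : c = d
    · rw [if_pos (h2.mpr hcd), if_pos hcd]
    · rw [if_neg (fun h => hcd (h2.mp h)), if_neg hcd]
  have huecol_on : ∀ c d : Fin N, (c:ℕ) < m*n → (d:ℕ) < m*n →
      (∑ r, (starRingEnd ℂ) (uecol c r) * uecol d r) = if c = d then (1:ℂ) else 0 := by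
    intro c d hc hd
    simp only [huecol]
    rw [dif_pos hc, dif_pos hd]
    show star (e *ᵥ u ⟨(c:ℕ)/n, (Nat.div_lt_iff_lt_mul hn0).mpr hc⟩
        ⟨(c:ℕ)%n, Nat.mod_lt _ hn0⟩) ⬝ᵥ
      (e *ᵥ u ⟨(d:ℕ)/n, (Nat.div_lt_iff_lt_mul hn0).mpr hd⟩ ⟨(d:ℕ)%n, Nat.mod_lt _ hn0⟩) = _
    rw [Matrix.star_mulVec, ← Matrix.dotProduct_mulVec, Matrix.mulVec_mulVec, hQu, hu_on]
    have h2 : ((⟨(c:ℕ)/n, (Nat.div_lt_iff_lt_mul hn0).mpr hc⟩ : Fin m) =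
          ⟨(d:ℕ)/n, (Nat.div_lt_iff_lt_mul hn0).mpr hd⟩ ∧
        (⟨(c:ℕ)%n, Nat.mod_lt _ hn0⟩ : Fin n) = ⟨(d:ℕ)%n, Nat.mod_lt _ hn0⟩) ↔ c = d := by
      rw [Fin.mk_eq_mk, Fin.mk_eq_mk]
      exact hpair c d hc hd
    by_cases hcd : c = d
    · rw [if_pos (h2.mpr hcd), if_pos hcd]
    · rw [if_neg (fun h => hcd (h2.mp h)), if_neg hcd]
  obtain ⟨W, hWmem, hWcol⟩ := exists_unitary_cols (m*n) ucol hucol_on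
  obtain ⟨U, hUmem, hUcol⟩ := exists_unitary_cols (m*n) uecol huecol_on
  have hVmem : star W ∈ Matrix.unitaryGroup (Fin N) ℂ := by
    rw [Matrix.mem_unitaryGroup_iff, star_star]
    exact Matrix.mem_unitaryGroup_iff'.mp hWmem
  have hid1 : ∀ (a : Fin m) (i : Fin n),
      (⟨((idx a i : Fin N) : ℕ)/n, (Nat.div_lt_iff_lt_mul hn0).mpr (hidx_ltmn a i)⟩ : Fin m)
        = a := by
    intro a i
    apply Fin.ext
    show ((a:ℕ)*n + (i:ℕ))/n = (a:ℕ)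
    exact idx_div hn0 (a:ℕ) (i:ℕ) i.2
  have hid2 : ∀ (a : Fin m) (i : Fin n),
      (⟨((idx a i : Fin N) : ℕ)%n, Nat.mod_lt _ hn0⟩ : Fin n) = i := by
    intro a i
    apply Fin.ext
    show ((a:ℕ)*n + (i:ℕ))%n = (i:ℕ)
    exact idx_mod (a:ℕ) (i:ℕ) i.2
  have hWcol' : ∀ (a : Fin m) (i : Fin n) (c : Fin N), W c (idx a i) = u a i c := by
    intro a i c
    rw [hWcol (idx a i) (hidx_ltmn a i) c]
    simp only [hucol]
    rw [dif_pos (hidx_ltmn a i), hid1 a i, hid2 a i]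
  have hVval : ∀ (a : Fin m) (j : Fin n) (c : Fin N),
      (star W) (idx a j) c = star (u a j c) := by
    intro a j c
    show star (W c (idx a j)) = _
    rw [hWcol' a j c]
  have hUval : ∀ (a : Fin m) (i : Fin n) (r : Fin N),
      U r (idx a i) = (e *ᵥ u a i) r := by
    intro a i r
    rw [hUcol (idx a i) (hidx_ltmn a i) r]
    simp only [huecol]
    rw [dif_pos (hidx_ltmn a i), hid1 a i, hid2 a i]
  have hsum_star : ∀ (a : Fin m) (j : Fin n) (c : Fin N),
      (∑ t, star (vv a t) * (E z0 j) t c) = star (u a j c) := by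
    intro a j c
    have h0 : u a j c = ∑ t, E j z0 c t * vv a t := rfl
    rw [h0, star_sum]
    refine Finset.sum_congr rfl fun t _ => ?_
    rw [star_mul']
    have h2s : star (E j z0 c t) = (E z0 j) t c := by
      rw [← Estar j z0, Matrix.conjTranspose_apply]
    rw [h2s]
    ring
  have hkey : ∀ i j : Fin n,
      e * E i j = ∑ a, U * Matrix.single (idx a i) (idx a j) (1:ℂ) * star W := by
    intro i j
    have h1 : E z0 z0 * E z0 j = E z0 j := by
      have h := Emul z0 z0 z0 j
      rwa [if_pos rfl] at h
    have h2 : E i z0 * E z0 j = E i j := by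
      have h := Emul i z0 z0 j
      rwa [if_pos rfl] at h
    have hsplit : e * E i j = ∑ a, (e * E i z0) *
        Matrix.of (fun p q => vv a p * star (vv a q)) * E z0 j := by
      calc e * E i j = e * (E i z0 * E z0 j) := by rw [h2]
        _ = (e * E i z0) * E z0 j := by rw [mul_assoc]
        _ = (e * E i z0) * (E z0 z0 * E z0 j) := by rw [h1]
        _ = ((e * E i z0) * E z0 z0) * E z0 j := by
            rw [mul_assoc (e * E i z0) (E z0 z0) (E z0 j)]
        _ = ((e * E i z0) * (∑ a, Matrix.of (fun p q => vv a p * star (vv a q)))) * E z0 j := by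
            rw [← houter]
        _ = ∑ a, (e * E i z0) * Matrix.of (fun p q => vv a p * star (vv a q)) * E z0 j := by
            rw [Finset.mul_sum, Finset.sum_mul]
    rw [hsplit]
    refine Finset.sum_congr rfl fun a _ => ?_
    ext r c
    rw [mul_outer_mul_apply, mul_std_mul_apply, hUval a i r, hVval a j c, hsum_star a j c]
    congr 1
    rw [← Matrix.mulVec_mulVec]
  refine ⟨k, ?_, U, hUmem, star W, hVmem, ?_⟩
  · calc 2*k*n = m*n := by rw [h2k]
      _ ≤ N := hmn
  · intro A
    have hgoal : Φ A = U * diagPad N N (2*k) (A : Matrix (Fin n) (Fin n) ℂ) * star W := by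
      have hd_pad : diagPad N N (2*k) (A : Matrix (Fin n) (Fin n) ℂ)
          = ∑ a : Fin m, ∑ i, ∑ j, (A : Matrix (Fin n) (Fin n) ℂ) i j •
              Matrix.single (idx a i) (idx a j) (1:ℂ) := by
        rw [h2k]
        exact diagPad_eq_sum hn0 idx hidx_val _
      rw [hd_pad]
      calc Φ A = e * ψ A := hP A
        _ = ∑ i, ∑ j, (A : Matrix (Fin n) (Fin n) ℂ) i j • (e * E i j) := by
            rw [hrep A, Finset.mul_sum]
            refine Finset.sum_congr rfl fun i _ => ?_
            rw [Finset.mul_sum]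
            refine Finset.sum_congr rfl fun j _ => ?_
            rw [Matrix.mul_smul]
        _ = ∑ i, ∑ j, (A : Matrix (Fin n) (Fin n) ℂ) i j •
              (∑ a, U * Matrix.single (idx a i) (idx a j) (1:ℂ) * star W) :=
            Finset.sum_congr rfl fun i _ => Finset.sum_congr rfl fun j _ => by rw [hkey i j]
        _ = ∑ a : Fin m, ∑ i, ∑ j, (A : Matrix (Fin n) (Fin n) ℂ) i j •
              (U * Matrix.single (idx a i) (idx a j) (1:ℂ) * star W) := by
            rw [Finset.sum_congr rfl fun i (_ : i ∈ Finset.univ) =>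
              Finset.sum_congr rfl fun j (_ : j ∈ Finset.univ) =>
                (Finset.smul_sum : (A : Matrix (Fin n) (Fin n) ℂ) i j •
                  (∑ a, U * Matrix.single (idx a i) (idx a j) (1:ℂ) * star W) = _)]
            rw [Finset.sum_congr rfl fun i (_ : i ∈ Finset.univ) =>
              (Finset.sum_comm :
                (∑ j, ∑ a, (A : Matrix (Fin n) (Fin n) ℂ) i j •
                  (U * Matrix.single (idx a i) (idx a j) (1:ℂ) * star W)) = _)]
            rw [Finset.sum_comm]
        _ = U * (∑ a : Fin m, ∑ i, ∑ j, (A : Matrix (Fin n) (Fin n) ℂ) i j •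
              Matrix.single (idx a i) (idx a j) (1:ℂ)) * star W := by
            symm
            rw [Finset.mul_sum, Finset.sum_mul]
            refine Finset.sum_congr rfl fun a _ => ?_
            rw [Finset.mul_sum, Finset.sum_mul]
            refine Finset.sum_congr rfl fun i _ => ?_
            rw [Finset.mul_sum, Finset.sum_mul]
            refine Finset.sum_congr rfl fun j _ => ?_
            rw [Matrix.mul_smul, Matrix.smul_mul]
    exact hgoal
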